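/- Suppose C₀ > 0 and Q₀ ∈ ℤ_+ are such that for every integer q ≥ Q₀ and every b ∈ ℤ_+ with b < q and gcd(b, q) = 1, there exist rationals b'/q' and b''/q'' (in lowest terms, q', q'' positive integers) with b/q = b'/q' + b''/q'', Ĉ(b'/q') ≤ C₀ · log q, and q'' < √q. Then there exists a constant C > 0 such that Ĉ(b/q) ≤ C · log q for every rational b/q ∈ (0,1) with gcd(b, q) = 1 and q ≥ 2. -/

import Mathlib

/-- Auxiliary continued fraction algorithm with fuel: for `x ∈ (0,1)`,
produces the list of partial quotients `[a₁, …, aₙ]` of `x = [0; a₁, …, aₙ]`. -/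
def cfListAux : ℕ → ℚ → List ℕ
  | 0, _ => []
  | (n + 1), x => if x = 0 then [] else ⌊x⁻¹⌋.toNat :: cfListAux n (x⁻¹ - (⌊x⁻¹⌋ : ℚ))

/-- The (canonical) list of partial quotients of a rational `x ∈ (0,1)`:
`x = [0; a₁, …, aₙ]` with each `aᵢ` a positive integer and `aₙ ≥ 2`.
The denominator of `x` is a valid fuel bound since denominators strictly decrease. -/
def cfList (x : ℚ) : List ℕ := cfListAux x.den x

/-- `S x` is the sum of the partial quotients of the rational `x ∈ (0,1)`. -/
def S (x : ℚ) : ℕ := (cfList x).sum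

/-- `RA A` is the set of rationals in `(0,1)` all of whose partial quotients are `≤ A`. -/
def RA (A : ℕ) : Set ℚ := {x | 0 < x ∧ x < 1 ∧ ∀ a ∈ cfList x, a ≤ A}

/-- `RepCost y n` : the rational `y` admits a representation as a finite signed sum
`y = Σ_α ε_α · x_α` with `ε_α ∈ {+1, -1}`, each `x_α = b_α/q_α ∈ (0,1)` in lowest terms,
and total partial-quotient cost `Σ_α S(x_α) = n`. -/
def RepCost (y : ℚ) (n : ℕ) : Prop :=
  ∃ (k : ℕ) (ε : Fin k → ℤ) (x : Fin k → ℚ),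
    (∀ i, ε i = 1 ∨ ε i = -1) ∧ (∀ i, 0 < x i ∧ x i < 1) ∧
    y = ∑ i, (ε i : ℚ) * x i ∧ n = ∑ i, S (x i)

/-- `CostLE y t` : the minimal representation cost `Ĉ(y)` is at most `t`. -/
def CostLE (y : ℚ) (t : ℝ) : Prop := ∃ n : ℕ, RepCost y n ∧ (n : ℝ) ≤ t
/-! ### Auxiliary lemmas -/


lemma cfListAux_zero (fuel : ℕ) : cfListAux fuel 0 = [] := by
  cases fuel <;> simp [cfListAux]

lemma key_step (b q : ℕ) (hb : 0 < b) :
    ((b:ℚ)/q)⁻¹ - ((⌊((b:ℚ)/q)⁻¹⌋ : ℤ) : ℚ) = ((q % b : ℕ) : ℚ) / b := by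
  rw [inv_div]
  have hfl : ⌊(q:ℚ)/(b:ℚ)⌋ = ((q / b : ℕ) : ℤ) := by
    have h0 := Rat.floor_intCast_div_natCast (q:ℤ) b
    rw [Int.natCast_div]
    rw [show (((q:ℤ)):ℚ) = (q:ℚ) by push_cast; rfl] at h0
    exact h0
  have hb' : (b:ℚ) ≠ 0 := by positivity
  have hmod : ((q % b : ℕ) : ℚ) = (q:ℚ) - (b:ℚ) * ((q/b : ℕ):ℚ) := by
    have h2 := Nat.div_add_mod q b
    have h3 : ((b * (q/b) + q % b : ℕ) : ℚ) = (q:ℚ) := by rw [h2]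
    push_cast at h3
    linarith
  rw [hfl, Int.cast_natCast, hmod, sub_div]
  congr 1
  rw [mul_comm, mul_div_assoc, div_self hb', mul_one]

lemma key_floor (b q : ℕ) :
    (⌊((b:ℚ)/q)⁻¹⌋ : ℤ).toNat = q / b := by
  rw [inv_div]
  have hfl : ⌊(q:ℚ)/(b:ℚ)⌋ = ((q / b : ℕ) : ℤ) := by
    have h0 := Rat.floor_intCast_div_natCast (q:ℤ) b
    rw [Int.natCast_div]
    rw [show (((q:ℤ)):ℚ) = (q:ℚ) by push_cast; rfl] at h0
    exact h0
  rw [hfl, Int.toNat_natCast]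

lemma cf_sum_le (b : ℕ) : ∀ q fuel : ℕ, 0 < b → b < q → Nat.Coprime b q → q ≤ fuel →
    (cfListAux fuel ((b:ℚ)/q)).sum + 1 ≤ b + q := by
  induction b using Nat.strong_induction_on with
  | _ b IH =>
    intro q fuel hb hbq hcop hfuel
    obtain ⟨f, rfl⟩ : ∃ f, fuel = f + 1 := ⟨fuel - 1, by omega⟩
    have hq0 : (0:ℚ) < q := by exact_mod_cast (by omega : 0 < q)
    have hx : ((b:ℚ)/q) ≠ 0 :=
      ne_of_gt (div_pos (by exact_mod_cast hb) hq0)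
    rw [cfListAux, if_neg hx, List.sum_cons, key_floor b q, key_step b q hb]
    rcases Nat.lt_or_ge b 2 with h2 | h2
    · -- b = 1
      have hb1 : b = 1 := by omega
      subst hb1
      simp only [Nat.mod_one, Nat.cast_zero, zero_div, cfListAux_zero, List.sum_nil, Nat.div_one]
      omega
    · -- b ≥ 2
      set r := q % b with hr
      have hrpos : 0 < r := by
        rcases Nat.eq_zero_or_pos r with h0 | h0
        · exfalso
          have : b ∣ q := Nat.dvd_of_mod_eq_zero h0
          have := Nat.Coprime.eq_one_of_dvd hcop this
          omega
        · exact h0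
      have hrb : r < b := Nat.mod_lt _ (by omega)
      have hcop' : Nat.Coprime r b := by
        unfold Nat.Coprime at hcop ⊢
        rw [← Nat.gcd_rec]
        exact hcop
      have hIH := IH r hrb b f hrpos hrb hcop' (by omega)
      have hk : q / b ≤ b * (q / b) := Nat.le_mul_of_pos_left _ (by omega)
      have hdm := Nat.div_add_mod q b
      omega

lemma den_div_nat (b q : ℕ) (hq : 0 < q) (hcop : Nat.Coprime b q) : ((b:ℚ)/q).den = q := by
  have := Rat.den_div_eq_of_coprime (a := (b:ℤ)) (b := (q:ℤ)) (by exact_mod_cast hq)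
    (by simpa using hcop)
  push_cast at this
  exact_mod_cast this

lemma S_pos {x : ℚ} (h0 : 0 < x) (h1 : x < 1) : 1 ≤ S x := by
  obtain ⟨d, hd⟩ : ∃ d, x.den = d + 1 := ⟨x.den - 1, by have := x.pos; omega⟩
  have hinv : (1:ℚ) < x⁻¹ := (one_lt_inv_iff₀).mpr ⟨h0, h1⟩
  have hfl : 1 ≤ ⌊x⁻¹⌋ := by
    rw [Int.le_floor]; exact_mod_cast hinv.le
  rw [S, cfList, hd, cfListAux, if_neg (ne_of_gt h0), List.sum_cons]
  omega

lemma S_half : S (1/2) = 2 := by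
  have h : ((1:ℚ)/2).den = 2 := by norm_num
  rw [S, cfList, h]
  norm_num [cfListAux]
  rfl

lemma repCost_zero : RepCost 0 0 :=
  ⟨0, fun _ => 1, fun _ => 1/2, fun i => i.elim0, fun i => i.elim0, by simp, by simp⟩

lemma repCost_single {x : ℚ} (h0 : 0 < x) (h1 : x < 1) : RepCost x (S x) :=
  ⟨1, fun _ => 1, fun _ => x, fun _ => Or.inl rfl, fun _ => ⟨h0, h1⟩, by simp, by simp⟩

lemma repCost_add {a b : ℚ} {n m : ℕ} (ha : RepCost a n) (hb : RepCost b m) :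
    RepCost (a + b) (n + m) := by
  obtain ⟨k, ε, x, h1, h2, h3, h4⟩ := ha
  obtain ⟨k', ε', x', g1, g2, g3, g4⟩ := hb
  refine ⟨k + k', Fin.append ε ε', Fin.append x x', ?_, ?_, ?_, ?_⟩
  · intro i
    refine Fin.addCases (fun j => ?_) (fun j => ?_) i <;>
      simp [Fin.append_left, Fin.append_right, h1, g1]
  · intro i
    refine Fin.addCases (fun j => ?_) (fun j => ?_) i <;>
      simp [Fin.append_left, Fin.append_right, h2, g2]
  · rw [Fin.sum_univ_add]
    simp only [Fin.append_left, Fin.append_right]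
    rw [h3, g3]
  · rw [Fin.sum_univ_add]
    simp only [Fin.append_left, Fin.append_right]
    rw [h4, g4]

lemma repCost_int (m : ℤ) : RepCost (m : ℚ) (4 * m.natAbs) := by
  refine ⟨2 * m.natAbs, fun _ => if 0 ≤ m then 1 else -1, fun _ => 1/2,
    fun i => by split <;> simp, fun i => by norm_num, ?_, ?_⟩
  · rw [Finset.sum_const, Finset.card_univ, Fintype.card_fin, nsmul_eq_mul]
    rcases le_or_gt 0 m with hm | hm
    · rw [if_pos hm]
      have h6 : (m.natAbs : ℚ) = (m : ℚ) := by
        rw [Nat.cast_natAbs]; exact_mod_cast abs_of_nonneg hm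
      push_cast
      rw [h6]
      ring
    · rw [if_neg (not_le.mpr hm)]
      have h6 : (m.natAbs : ℚ) = -(m : ℚ) := by
        rw [Nat.cast_natAbs]; exact_mod_cast abs_of_neg hm
      push_cast
      rw [h6]
      ring
  · rw [Finset.sum_const, Finset.card_univ, Fintype.card_fin, S_half, smul_eq_mul]
    omega

lemma repCost_abs {y : ℚ} {n : ℕ} (h : RepCost y n) : |y| ≤ (n : ℚ) := by
  obtain ⟨k, ε, x, h1, h2, h3, h4⟩ := h
  rw [h3, h4]
  calc |∑ i, (ε i : ℚ) * x i| ≤ ∑ i, |(ε i : ℚ) * x i| := Finset.abs_sum_le_sum_abs _ _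
    _ ≤ ∑ i, (S (x i) : ℚ) := by
        apply Finset.sum_le_sum
        intro i _
        rw [abs_mul]
        have hε : |(ε i : ℚ)| = 1 := by rcases h1 i with h | h <;> simp [h]
        rw [hε, one_mul, abs_of_pos (h2 i).1]
        have hS := S_pos (h2 i).1 (h2 i).2
        calc x i ≤ 1 := (h2 i).2.le
          _ ≤ (S (x i) : ℚ) := by exact_mod_cast hS
    _ = ((∑ i, S (x i) : ℕ) : ℚ) := by push_cast; ring

/-- the iteration step in the proof of Proposition 1. If for every
`q ≥ Q₀` and every `b ∈ ℤ_+` with `b < q`, `gcd(b,q) = 1`, one can split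
`b/q = b'/q' + b''/q''` with `Ĉ(b'/q') ≤ C₀ log q` and `q'' < √q`, then there is `C > 0`
with `Ĉ(b/q) ≤ C log q` for every rational `b/q ∈ (0,1)` in lowest terms with `q ≥ 2`. -/
theorem statement8 (C₀ : ℝ) (hC₀ : 0 < C₀) (Q₀ : ℕ) (hQ₀ : 0 < Q₀)
    (h : ∀ q : ℕ, Q₀ ≤ q →
      ∀ b : ℕ, 0 < b → b < q → Nat.Coprime b q →
        ∃ x y : ℚ, (b : ℚ) / q = x + y ∧
          CostLE x (C₀ * Real.log q) ∧ (y.den : ℝ) < Real.sqrt q) :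
    ∃ C : ℝ, 0 < C ∧
      ∀ b q : ℕ, 0 < b → b < q → 2 ≤ q → Nat.Coprime b q →
        CostLE ((b : ℚ) / q) (C * Real.log q) := by
  have hlog2 : 0 < Real.log 2 := Real.log_pos (by norm_num)
  set C : ℝ := 2 * (5*C₀ + ((Q₀:ℝ) + 8)/Real.log 2) with hC
  have hCpos : 0 < C := by positivity
  refine ⟨C, hCpos, ?_⟩
  suffices H : ∀ q : ℕ, ∀ b : ℕ, 0 < b → b < q → 2 ≤ q → Nat.Coprime b q →
      CostLE ((b:ℚ)/q) (C * Real.log q) by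
    intro b q h1 h2 h3 h4; exact H q b h1 h2 h3 h4
  intro q
  induction q using Nat.strong_induction_on with
  | _ q IH =>
  intro b hb hbq hq2 hcop
  have hq0 : 0 < q := by omega
  have hq2R : (2:ℝ) ≤ (q:ℝ) := by exact_mod_cast hq2
  have hlogq : Real.log 2 ≤ Real.log q := Real.log_le_log (by norm_num) hq2R
  have hlogq0 : 0 < Real.log q := lt_of_lt_of_le hlog2 hlogq
  have hbqQ : (0:ℚ) < (b:ℚ)/q :=
    div_pos (by exact_mod_cast hb) (by exact_mod_cast hq0)
  have hbq1 : ((b:ℚ)/q) < 1 := by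
    rw [div_lt_one (by exact_mod_cast hq0)]
    exact_mod_cast hbq
  by_cases hQ : Q₀ ≤ q
  · -- inductive step
    obtain ⟨x, y, hxy, hcx, hy⟩ := h q hQ b hb hbq hcop
    obtain ⟨nx, hnx, hnxle⟩ := hcx
    have hsplit : (b:ℚ)/q = x + (⌊y⌋:ℚ) + Int.fract y := by
      rw [hxy, add_assoc, Int.floor_add_fract]
    have hfden : (Int.fract y).den = y.den := by
      apply Nat.dvd_antisymm
      · have h1 : Int.fract y = y + ((-⌊y⌋ : ℤ):ℚ) := by rw [Int.fract]; push_cast; ring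
        have h2 := Rat.add_den_dvd y ((-⌊y⌋ : ℤ):ℚ)
        rw [← h1, Rat.den_intCast, mul_one] at h2
        exact h2
      · have h1 : y = Int.fract y + ((⌊y⌋ : ℤ):ℚ) := by rw [Int.fract]; ring
        have h2 := Rat.add_den_dvd (Int.fract y) ((⌊y⌋:ℤ):ℚ)
        rw [← h1, Rat.den_intCast, mul_one] at h2
        exact h2
    have hfrep : ∃ nf : ℕ, RepCost (Int.fract y) nf ∧ (nf : ℝ) ≤ C/2 * Real.log q := by
      by_cases hf0 : Int.fract y = 0
      · refine ⟨0, by rw [hf0]; exact repCost_zero, ?_⟩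
        simp only [Nat.cast_zero]
        exact le_of_lt (mul_pos (div_pos hCpos two_pos) hlogq0)
      · have hfpos : 0 < Int.fract y := lt_of_le_of_ne (Int.fract_nonneg y) (Ne.symm hf0)
        have hflt : Int.fract y < 1 := Int.fract_lt_one y
        have hnum_pos : 0 < (Int.fract y).num := Rat.num_pos.mpr hfpos
        have hnumlt : (Int.fract y).num < ((Int.fract y).den : ℤ) :=
          Rat.lt_one_iff_num_lt_denom.mpr hflt
        have hden2 : 2 ≤ (Int.fract y).den := by
          rcases Nat.lt_or_ge (Int.fract y).den 2 with hlt | hge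
          · exfalso
            have := (Int.fract y).pos
            omega
          · exact hge
        have hdenq : (Int.fract y).den < q := by
          have h1 : ((Int.fract y).den : ℝ) < Real.sqrt q := by rw [hfden]; exact hy
          have h2 : Real.sqrt q < q := by
            rw [Real.sqrt_lt' (by linarith)]
            nlinarith
          have h3 : ((Int.fract y).den : ℝ) < (q:ℝ) := h1.trans h2
          exact_mod_cast h3
        have hcop2 : Nat.Coprime (Int.fract y).num.toNat (Int.fract y).den := by
          have hco := (Int.fract y).reduced
          have heq : (Int.fract y).num.natAbs = (Int.fract y).num.toNat := by omega
          rwa [heq] at hco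
        have hval : (((Int.fract y).num.toNat : ℚ))/((Int.fract y).den : ℚ) = Int.fract y := by
          rw [show (((Int.fract y).num.toNat : ℚ)) = ((Int.fract y).num : ℚ) by
            exact_mod_cast congrArg (fun z : ℤ => (z:ℚ)) (Int.toNat_of_nonneg hnum_pos.le)]
          exact Rat.num_div_den _
        obtain ⟨nf, hrf, hle⟩ := IH (Int.fract y).den hdenq (Int.fract y).num.toNat
          (by omega) (by omega) hden2 hcop2
        rw [hval] at hrf
        refine ⟨nf, hrf, ?_⟩
        calc (nf:ℝ) ≤ C * Real.log (Int.fract y).den := hle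
          _ ≤ C * Real.log (Real.sqrt q) := by
              apply mul_le_mul_of_nonneg_left _ hCpos.le
              apply Real.log_le_log (by exact_mod_cast (Int.fract y).pos)
              rw [hfden]; exact hy.le
          _ = C/2 * Real.log q := by
              rw [Real.log_sqrt (by positivity)]; ring
    obtain ⟨nf, hrf, hnfle⟩ := hfrep
    have hrep : RepCost ((b:ℚ)/q) (nx + 4*(⌊y⌋).natAbs + nf) := by
      rw [hsplit]
      exact repCost_add (repCost_add hnx (repCost_int ⌊y⌋)) hrf
    refine ⟨_, hrep, ?_⟩
    have habsx : |x| ≤ (nx:ℚ) := repCost_abs hnx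
    have hyb : |y| ≤ (nx:ℚ) + 1 := by
      have hy' : y = (b:ℚ)/q - x := by linarith [hxy.symm.le, hxy.le]
      rw [hy']
      calc |(b:ℚ)/q - x| ≤ |(b:ℚ)/q| + |x| := abs_sub _ _
        _ ≤ 1 + (nx:ℚ) := by
            have : |(b:ℚ)/q| ≤ 1 := by rw [abs_of_pos hbqQ]; exact hbq1.le
            linarith
        _ = (nx:ℚ) + 1 := by ring
    have hym : |(⌊y⌋:ℚ)| ≤ |y| + 1 := by
      have h1 : (⌊y⌋:ℚ) ≤ y := Int.floor_le y
      have h2 : y - 1 < (⌊y⌋:ℚ) := Int.sub_one_lt_floor y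
      rw [abs_le]
      constructor
      · have := neg_abs_le y; linarith
      · have := le_abs_self y; linarith
    have hmQ : ((⌊y⌋).natAbs : ℚ) ≤ (nx:ℚ) + 2 := by
      rw [Nat.cast_natAbs]
      have : |((⌊y⌋:ℤ):ℚ)| ≤ (nx:ℚ) + 2 := le_trans hym (by linarith)
      calc ((|⌊y⌋| : ℤ) : ℚ) = |((⌊y⌋:ℤ):ℚ)| := by push_cast; rfl
        _ ≤ (nx:ℚ) + 2 := this
    have hmN : (⌊y⌋).natAbs ≤ nx + 2 := by exact_mod_cast hmQ
    have hmR : ((⌊y⌋).natAbs : ℝ) ≤ (nx:ℝ) + 2 := by exact_mod_cast hmN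
    have hfac : (0:ℝ) ≤ ((Q₀:ℝ)+8)/Real.log 2 := by positivity
    have h9 : ((Q₀:ℝ)+8) ≤ ((Q₀:ℝ)+8)/Real.log 2 * Real.log q := by
      calc ((Q₀:ℝ)+8) = ((Q₀:ℝ)+8)/Real.log 2 * Real.log 2 := by
            field_simp
        _ ≤ ((Q₀:ℝ)+8)/Real.log 2 * Real.log q := mul_le_mul_of_nonneg_left hlogq hfac
    have hkey : 5*C₀*Real.log q + 8 ≤ C/2 * Real.log q := by
      have hCeq : C/2 = 5*C₀ + ((Q₀:ℝ)+8)/Real.log 2 := by rw [hC]; ring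
      rw [hCeq, add_mul]
      have hQ0 : (0:ℝ) ≤ (Q₀:ℝ) := Nat.cast_nonneg _
      linarith
    push_cast
    linarith
  · -- base case : q < Q₀
    have hden : ((b:ℚ)/q).den = q := den_div_nat b q hq0 hcop
    refine ⟨S ((b:ℚ)/q), repCost_single hbqQ hbq1, ?_⟩
    have hS : S ((b:ℚ)/q) + 1 ≤ b + q := by
      rw [S, cfList, hden]
      exact cf_sum_le b q q hb hbq hcop le_rfl
    have hSN : S ((b:ℚ)/q) ≤ 2*Q₀ := by omega
    have hSR : ((S ((b:ℚ)/q)) : ℝ) ≤ 2*(Q₀:ℝ) := by exact_mod_cast hSN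
    have he : ((Q₀:ℝ)+8)/Real.log 2 * Real.log 2 = (Q₀:ℝ)+8 :=
      div_mul_cancel₀ _ (ne_of_gt hlog2)
    have hc2 : C * Real.log 2 = 10*C₀*Real.log 2 + 2*((Q₀:ℝ)+8) := by
      rw [hC]; field_simp; ring
    have hc3 : 2*(Q₀:ℝ) ≤ C * Real.log 2 := by
      have := mul_pos hC₀ hlog2
      rw [hc2]; linarith
    have hc4 : C * Real.log 2 ≤ C * Real.log q := mul_le_mul_of_nonneg_left hlogq hCpos.le
    linarith
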